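/- Every permutation π of {1,...,n} avoiding both patterns 312 and 321 is a direct sum w_{m₁} ⊕ w_{m₂} ⊕ ... ⊕ w_{m_k} for a unique composition (m₁,...,m_k) of n into positive parts, where w_m denotes the permutation 2 3 ... m 1 of size m. Moreover this correspondence is a bijection between permutations of size n avoiding 312 and 321 and compositions of n into positive parts. -/

import Mathlib

def Contains {n k : ℕ} (σ : Equiv.Perm (Fin n)) (π : Equiv.Perm (Fin k)) : Prop :=
  ∃ f : Fin k → Fin n, StrictMono f ∧ ∀ a b : Fin k, π a < π b ↔ σ (f a) < σ (f b)

def Avoids {n k : ℕ} (σ : Equiv.Perm (Fin n)) (π : Equiv.Perm (Fin k)) : Prop :=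
  ¬ Contains σ π

/-- The permutation `w_m = 2 3 ⋯ m 1` of size `m`, 0-based: `i ↦ i + 1` for `i + 1 < m`,
and `m - 1 ↦ 0`. -/
def wfun (m i : ℕ) : ℕ := if i + 1 < m then i + 1 else 0

/-- The direct sum `w_{m₁} ⊕ w_{m₂} ⊕ ⋯ ⊕ w_{m_k}` for a list of block sizes, as a
function on 0-based positions. -/
def dsum : List ℕ → ℕ → ℕ
  | [], i => i
  | m :: L, i => if i < m then wfun m i else m + dsum L (i - m)


lemma wfun_lt {m i : ℕ} (hm : 0 < m) : wfun m i < m := by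
  unfold wfun; split <;> omega

lemma dsum_lt_sum : ∀ (L : List ℕ), (∀ m ∈ L, 0 < m) → ∀ i, i < L.sum → dsum L i < L.sum := by
  intro L
  induction L with
  | nil => intro _ i hi; simpa [dsum] using hi
  | cons m t ih =>
    intro hL i hi
    have hm : 0 < m := hL m (by simp)
    simp only [List.sum_cons] at hi ⊢
    simp only [dsum]
    split
    · have := wfun_lt (i := i) hm; omega
    · have := ih (fun x hx => hL x (by simp [hx])) (i - m) (by omega)
      omega

lemma dsum_injOn : ∀ (L : List ℕ), (∀ m ∈ L, 0 < m) → ∀ i j, i < L.sum → j < L.sum →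
    dsum L i = dsum L j → i = j := by
  intro L
  induction L with
  | nil => intro _ i j _ _ h; simpa [dsum] using h
  | cons m t ih =>
    intro hL i j hi hj h
    have hm : 0 < m := hL m (by simp)
    simp only [List.sum_cons] at hi hj
    simp only [dsum] at h
    split at h <;> split at h
    · unfold wfun at h; split at h <;> split at h <;> omega
    · have := wfun_lt (i := i) hm; omega
    · have := wfun_lt (i := j) hm; omega
    · have := ih (fun x hx => hL x (by simp [hx])) (i - m) (j - m) (by omega) (by omega) (by omega)
      omega

lemma dsum_three : ∀ (L : List ℕ), (∀ m ∈ L, 0 < m) → ∀ i j k, i < j → j < k →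
    dsum L j < dsum L i → dsum L i < dsum L k := by
  intro L
  induction L with
  | nil => intro _ i j k hij hjk h; simp [dsum] at h ⊢; omega
  | cons m t ih =>
    intro hL i j k hij hjk h
    have hm : 0 < m := hL m (by simp)
    have ht : ∀ x ∈ t, 0 < x := fun x hx => hL x (by simp [hx])
    simp only [dsum] at h ⊢
    by_cases him : i < m
    · rw [if_pos him] at h ⊢
      by_cases hjm : j < m
      · rw [if_pos hjm] at h
        -- i < j < m, so wfun m i = i + 1
        have hwi : wfun m i = i + 1 := by unfold wfun; rw [if_pos (by omega)]
        rw [hwi] at h ⊢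
        have hj1 : ¬ (j + 1 < m) := by
          intro hc
          unfold wfun at h
          rw [if_pos hc] at h
          omega
        rw [if_neg (by omega : ¬ k < m)]
        omega
      · exfalso
        rw [if_neg hjm] at h
        have := wfun_lt (i := i) hm
        omega
    · rw [if_neg him] at h ⊢
      rw [if_neg (by omega : ¬ j < m)] at h
      rw [if_neg (by omega : ¬ k < m)]
      have := ih ht (i - m) (j - m) (k - m) (by omega) (by omega) (by omega)
      omega

lemma exists_list : ∀ (n : ℕ) (f : ℕ → ℕ),
    (∀ i j, i < n → j < n → f i = f j → i = j) →
    (∀ i, i < n → f i < n) → (∀ i, i < n → f i ≤ i + 1) →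
    ∃ L : List ℕ, (∀ m ∈ L, 0 < m) ∧ L.sum = n ∧ ∀ i, i < n → f i = dsum L i := by
  intro n
  induction n using Nat.strong_induction_on with
  | _ n ih =>
    intro f hinj hlt hle
    rcases Nat.eq_zero_or_pos n with rfl | hn
    · exact ⟨[], by simp, by simp, by omega⟩
    have hex : ∃ p, p < n ∧ f p = 0 := by
      by_contra hc
      push_neg at hc
      have h1 : ((Finset.range n).image f).card = n := by
        rw [Finset.card_image_of_injOn, Finset.card_range]
        intro i hi j hj hfe
        exact hinj i j (Finset.mem_range.mp hi) (Finset.mem_range.mp hj) hfe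
      have h2 : (Finset.range n).image f ⊆ (Finset.range n).erase 0 := by
        intro x hx
        simp only [Finset.mem_image, Finset.mem_range] at hx
        obtain ⟨i, hi, rfl⟩ := hx
        exact Finset.mem_erase.mpr ⟨hc i hi, Finset.mem_range.mpr (hlt i hi)⟩
      have h3 := Finset.card_le_card h2
      rw [h1, Finset.card_erase_of_mem (Finset.mem_range.mpr hn), Finset.card_range] at h3
      omega
    obtain ⟨p, ⟨hpn, hfp⟩, hmin'⟩ : ∃ p, (p < n ∧ f p = 0) ∧ ∀ q, q < p → ¬(q < n ∧ f q = 0) :=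
      ⟨Nat.find hex, Nat.find_spec hex, fun q hq => Nat.find_min hex hq⟩
    have hmin : ∀ q, q < p → f q ≠ 0 := fun q hq hq0 => hmin' q hq ⟨by omega, hq0⟩
    have fval : ∀ i, i < p → f i = i + 1 := by
      intro i
      induction i using Nat.strong_induction_on with
      | _ i ihi =>
        intro hip
        have h1 : f i ≤ i + 1 := hle i (by omega)
        have h2 : f i ≠ 0 := hmin i hip
        by_contra hne
        have h4 := ihi (f i - 1) (by omega) (by omega)
        have h5 := hinj (f i - 1) i (by omega) (by omega) (by omega)
        omega
    obtain ⟨m, hm⟩ : ∃ m, m = p + 1 := ⟨_, rfl⟩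
    have hhigh : ∀ i, m ≤ i → i < n → m ≤ f i := by
      intro i hmi hin
      by_contra hc
      push_neg at hc
      rcases Nat.eq_zero_or_pos (f i) with h0 | h0
      · have := hinj i p (by omega) (by omega) (by omega)
        omega
      · have h4 := fval (f i - 1) (by omega)
        have h5 := hinj (f i - 1) i (by omega) (by omega) (by omega)
        omega
    obtain ⟨L', hL'pos, hL'sum, hL'⟩ := ih (n - m) (by omega) (fun i => f (i + m) - m)
      (by
        intro i j hi hj hfe
        have h1 := hhigh (i + m) (by omega) (by omega)
        have h2 := hhigh (j + m) (by omega) (by omega)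
        have := hinj (i + m) (j + m) (by omega) (by omega) (by omega)
        omega)
      (by
        intro i hi
        show f (i + m) - m < n - m
        have h1 := hhigh (i + m) (by omega) (by omega)
        have h2 := hlt (i + m) (by omega)
        omega)
      (by
        intro i hi
        show f (i + m) - m ≤ i + 1
        have := hle (i + m) (by omega)
        omega)
    refine ⟨m :: L', ?_, ?_, ?_⟩
    · intro x hx
      rcases List.mem_cons.mp hx with rfl | hx
      · omega
      · exact hL'pos x hx
    · simp only [List.sum_cons, hL'sum]; omega
    · intro i hin
      simp only [dsum]
      by_cases him : i < m
      · rw [if_pos him]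
        rcases Nat.lt_or_ge i p with hip | hip
        · rw [fval i hip]
          unfold wfun
          rw [if_pos (by omega)]
        · have : i = p := by omega
          subst this
          unfold wfun
          rw [if_neg (by omega)]
          exact hfp
      · rw [if_neg him]
        have h1 := hL' (i - m) (by omega)
        have h2 := hhigh i (by omega) hin
        have h3 : i - m + m = i := by omega
        rw [h3] at h1
        omega

lemma list_unique : ∀ (L L' : List ℕ), (∀ m ∈ L, 0 < m) → (∀ m ∈ L', 0 < m) →
    L.sum = L'.sum → (∀ i, i < L.sum → dsum L i = dsum L' i) → L = L' := by
  intro L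
  induction L with
  | nil =>
    intro L' _ h' hsum _
    cases L' with
    | nil => rfl
    | cons m t =>
      exfalso
      have := h' m (by simp)
      simp only [List.sum_nil, List.sum_cons] at hsum
      omega
  | cons m t ihL =>
    intro L' hpos h'pos hsum heq
    cases L' with
    | nil =>
      exfalso
      have := hpos m (by simp)
      simp only [List.sum_nil, List.sum_cons] at hsum
      omega
    | cons m' t' =>
      have hm : 0 < m := hpos m (by simp)
      have hm' : 0 < m' := h'pos m' (by simp)
      have key : m = m' := by
        have h1 := heq (m - 1) (by simp only [List.sum_cons]; omega)
        simp only [dsum] at h1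
        rw [if_pos (by omega)] at h1
        have hw : wfun m (m - 1) = 0 := by unfold wfun; rw [if_neg (by omega)]
        rw [hw] at h1
        by_cases hcm : m - 1 < m'
        · rw [if_pos hcm] at h1
          unfold wfun at h1
          split at h1 <;> omega
        · rw [if_neg hcm] at h1
          omega
      subst key
      have htt : t = t' := by
        apply ihL t' (fun x hx => hpos x (by simp [hx])) (fun x hx => h'pos x (by simp [hx]))
          (by simp only [List.sum_cons] at hsum; omega)
        intro i hi
        have h1 := heq (m + i) (by simp only [List.sum_cons]; omega)
        simp only [dsum] at h1
        rw [if_neg (by omega), if_neg (by omega), Nat.add_sub_cancel_left] at h1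
        omega
      rw [htt]
lemma strictMono_three {n : ℕ} (x y z : Fin n) (h1 : x < y) (h2 : y < z) :
    StrictMono ![x, y, z] := by
  intro a b hab
  fin_cases a <;> fin_cases b <;>
    simp_all [Matrix.cons_val_zero, Matrix.cons_val_one, Matrix.head_cons] <;>
    first
      | exact h1 | exact h2 | exact h1.trans h2
      | exact absurd hab (by decide)

lemma contains_312 {n : ℕ} (σ : Equiv.Perm (Fin n)) (x y z : Fin n)
    (hxy : x < y) (hyz : y < z) (h1 : σ y < σ x) (h2 : σ z < σ x) (h3 : σ y < σ z) :
    Contains σ ((finRotate 3)⁻¹) := by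
  refine ⟨![x, y, z], strictMono_three x y z hxy hyz, fun a b => ?_⟩
  fin_cases a <;> fin_cases b <;>
    simp only [Matrix.cons_val_zero, Matrix.cons_val_one, Matrix.head_cons,
      Matrix.cons_val_two, Matrix.tail_cons, Fin.isValue]
  · exact iff_of_false (by decide) (lt_irrefl _)
  · exact iff_of_false (by decide) (asymm h1)
  · exact iff_of_false (by decide) (asymm h2)
  · exact iff_of_true (by decide) h1
  · exact iff_of_false (by decide) (lt_irrefl _)
  · exact iff_of_true (by decide) h3
  · exact iff_of_true (by decide) h2
  · exact iff_of_false (by decide) (asymm h3)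
  · exact iff_of_false (by decide) (lt_irrefl _)

lemma contains_321 {n : ℕ} (σ : Equiv.Perm (Fin n)) (x y z : Fin n)
    (hxy : x < y) (hyz : y < z) (h1 : σ y < σ x) (h2 : σ z < σ x) (h3 : σ z < σ y) :
    Contains σ (Fin.revPerm : Equiv.Perm (Fin 3)) := by
  refine ⟨![x, y, z], strictMono_three x y z hxy hyz, fun a b => ?_⟩
  fin_cases a <;> fin_cases b <;>
    simp only [Matrix.cons_val_zero, Matrix.cons_val_one, Matrix.head_cons,
      Matrix.cons_val_two, Matrix.tail_cons, Fin.isValue]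
  · exact iff_of_false (by decide) (lt_irrefl _)
  · exact iff_of_false (by decide) (asymm h1)
  · exact iff_of_false (by decide) (asymm h2)
  · exact iff_of_true (by decide) h1
  · exact iff_of_false (by decide) (lt_irrefl _)
  · exact iff_of_false (by decide) (asymm h3)
  · exact iff_of_true (by decide) h2
  · exact iff_of_true (by decide) h3
  · exact iff_of_false (by decide) (lt_irrefl _)

lemma exists_bad_triple {n : ℕ} (π : Equiv.Perm (Fin n)) (i : Fin n)
    (hi : (i : ℕ) + 1 < (π i : ℕ)) :
    ∃ j k : Fin n, i < j ∧ j < k ∧ π j < π i ∧ π k < π i := by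
  classical
  set S : Finset (Fin n) := Finset.univ.filter (fun t => π t < π i) with hS
  have hScard : S.card = (π i : ℕ) := by
    have he : S = (Finset.Iio (π i)).map π.symm.toEmbedding := by
      ext t
      simp [hS, Equiv.symm_apply_eq, eq_comm]
    rw [he, Finset.card_map, Fin.card_Iio]
  set T : Finset (Fin n) := S.filter (fun t => i < t) with hT
  have hsub : S ⊆ Finset.Iio i ∪ T := by
    intro t ht
    have h1 : π t < π i := (Finset.mem_filter.mp ht).2
    have h2 : t ≠ i := fun h => absurd h1 (by simp [h])
    rcases lt_or_gt_of_ne h2 with h | h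
    · exact Finset.mem_union_left _ (Finset.mem_Iio.mpr h)
    · exact Finset.mem_union_right _ (Finset.mem_filter.mpr ⟨ht, h⟩)
  have hc1 := Finset.card_le_card hsub
  have hc2 := Finset.card_union_le (Finset.Iio i) T
  rw [Fin.card_Iio] at hc2
  have hT2 : 1 < T.card := by omega
  obtain ⟨a, ha, b, hb, hab⟩ := Finset.one_lt_card.mp hT2
  have ha' := Finset.mem_filter.mp ha
  have hb' := Finset.mem_filter.mp hb
  have ha'' := (Finset.mem_filter.mp ha'.1).2
  have hb'' := (Finset.mem_filter.mp hb'.1).2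
  rcases hab.lt_or_gt with h | h
  · exact ⟨a, b, ha'.2, h, ha'', hb''⟩
  · exact ⟨b, a, hb'.2, h, hb'', ha''⟩

/-- Every permutation of size `n` avoiding 312 and 321 is `w_{m₁} ⊕ ⋯ ⊕ w_{m_k}` for a
unique composition `(m₁, …, m_k)` of `n` into positive parts, and conversely every such
composition arises from such a permutation; hence this correspondence is a bijection. -/
theorem avoid_312_321_iff_direct_sum_of_w (n : ℕ) :
    (∀ π : Equiv.Perm (Fin n), Avoids π ((finRotate 3)⁻¹) →
      Avoids π (Fin.revPerm : Equiv.Perm (Fin 3)) →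
      ∃! L : List ℕ, (∀ m ∈ L, 0 < m) ∧ L.sum = n ∧ ∀ i : Fin n, (π i : ℕ) = dsum L i) ∧
    (∀ L : List ℕ, (∀ m ∈ L, 0 < m) → L.sum = n →
      ∃ π : Equiv.Perm (Fin n), Avoids π ((finRotate 3)⁻¹) ∧
        Avoids π (Fin.revPerm : Equiv.Perm (Fin 3)) ∧ ∀ i : Fin n, (π i : ℕ) = dsum L i) := by
  constructor
  · intro π h312 h321
    have hP : ∀ i : Fin n, (π i : ℕ) ≤ (i : ℕ) + 1 := by
      by_contra hc
      push_neg at hc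
      obtain ⟨i, hi⟩ := hc
      obtain ⟨j, k, hij, hjk, hji, hki⟩ := exists_bad_triple π i hi
      rcases lt_trichotomy (π j) (π k) with h | h | h
      · exact h312 (contains_312 π i j k hij hjk hji hki h)
      · exact absurd (π.injective h) (ne_of_lt hjk)
      · exact h321 (contains_321 π i j k hij hjk hji hki h)
    obtain ⟨L, hLpos, hLsum, hLval⟩ :=
      exists_list n (fun i => if h : i < n then (π ⟨i, h⟩ : ℕ) else i)
      (by
        intro i j hi hj h
        rw [dif_pos hi, dif_pos hj] at h
        have h2 := π.injective (Fin.val_injective h)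
        simpa using h2)
      (by
        intro i hi
        show (if h : i < n then (π ⟨i, h⟩ : ℕ) else i) < n
        rw [dif_pos hi]
        exact (π ⟨i, hi⟩).isLt)
      (by
        intro i hi
        show (if h : i < n then (π ⟨i, h⟩ : ℕ) else i) ≤ i + 1
        rw [dif_pos hi]
        exact hP ⟨i, hi⟩)
    refine ⟨L, ⟨hLpos, hLsum, fun i => ?_⟩, ?_⟩
    · have h2 := hLval i.val i.isLt
      rw [dif_pos i.isLt] at h2
      simpa using h2
    · rintro L' ⟨hpos', hsum', hval'⟩
      apply list_unique L' L hpos' hLpos (hsum'.trans hLsum.symm)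
      intro i hi
      rw [hsum'] at hi
      have h1 := hval' ⟨i, hi⟩
      have h2 := hLval i hi
      rw [dif_pos hi] at h2
      simp only at h1
      omega
  · intro L hpos hsum
    have hbd : ∀ i : Fin n, dsum L (i : ℕ) < n := by
      intro i
      have h := dsum_lt_sum L hpos i (by rw [hsum]; exact i.isLt)
      rw [hsum] at h
      exact h
    have hfinj : Function.Injective (fun i : Fin n => (⟨dsum L (i : ℕ), hbd i⟩ : Fin n)) := by
      intro a b h
      have h' : dsum L (a : ℕ) = dsum L (b : ℕ) := congrArg Fin.val h
      have h2 := dsum_injOn L hpos a b (by rw [hsum]; exact a.isLt)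
        (by rw [hsum]; exact b.isLt) h'
      exact Fin.ext h2
    set π : Equiv.Perm (Fin n) :=
      Equiv.ofBijective _ (Finite.injective_iff_bijective.mp hfinj) with hπdef
    have hπ : ∀ i : Fin n, (π i : ℕ) = dsum L i := fun i => rfl
    have havoid : ∀ pat : Equiv.Perm (Fin 3), pat 1 < pat 0 → pat 2 < pat 0 →
        Avoids π pat := by
      intro pat h1 h2 hcon
      obtain ⟨g, hg, hiff⟩ := hcon
      have e1 : (π (g 1) : ℕ) < (π (g 0) : ℕ) := (hiff 1 0).mp h1
      have e2 : (π (g 2) : ℕ) < (π (g 0) : ℕ) := (hiff 2 0).mp h2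
      rw [hπ, hπ] at e1 e2
      have hg01 : ((g 0 : Fin n) : ℕ) < ((g 1 : Fin n) : ℕ) := hg (by decide)
      have hg12 : ((g 1 : Fin n) : ℕ) < ((g 2 : Fin n) : ℕ) := hg (by decide)
      have key := dsum_three L hpos (g 0) (g 1) (g 2) hg01 hg12 e1
      omega
    exact ⟨π, havoid _ (by decide) (by decide), havoid _ (by decide) (by decide), hπ⟩
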